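/- arXiv:2109.07813 — 3 statements merged into one kernel-verified Lean document; each statement's English description precedes it below -/
import Mathlib

section
/- (Rosenthal's inequality) For every p > 2 there exists a constant C_p > 0, depending only on p, such that for every n ∈ ℕ and all independent real-valued random variables Y_1,…,Y_n with E[Y_i] = 0 and E[|Y_i|^p] < ∞ for each i, one has E[|Y_1 + ⋯ + Y_n|^p] ≤ C_p · max{ Σ_{i=1}^n E[|Y_i|^p], (Σ_{i=1}^n E[Y_i^2])^{p/2} }. -/
open MeasureTheory ProbabilityTheory
open Real

-- 1-d pointwise inequality
lemma oneDim (p : ℝ) (hp : 2 < p) :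
    ∃ K : ℝ, 1 ≤ K ∧ ∀ t : ℝ, |1 + t| ^ p ≤ 1 + p * t + K * (t ^ 2 + |t| ^ p) := by
  have hp0 : (0:ℝ) < p := by linarith
  refine ⟨(1 + 2*p) ^ p + p * (2*p) ^ (p-1) + p * p + 1, ?_, ?_⟩
  · nlinarith [rpow_nonneg (by linarith : (0:ℝ) ≤ 1 + 2*p) p,
      rpow_nonneg (by linarith : (0:ℝ) ≤ 2*p) (p-1)]
  intro t
  set K := (1 + 2*p) ^ p + p * (2*p) ^ (p-1) + p * p + 1 with hK
  rcases le_or_gt |t| (1/(2*p)) with h | h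
  · -- small t
    have ht2 : |t| ≤ 1/4 := le_trans h (by rw [div_le_div_iff₀] <;> nlinarith)
    have h1t : (0:ℝ) < 1 + t := by cases abs_le.1 ht2; linarith
    have e1 : |1 + t| ^ p = exp (p * Real.log (1+t)) := by
      rw [abs_of_pos h1t, rpow_def_of_pos h1t, mul_comm]
    have e2 : Real.log (1+t) ≤ t := by
      have := Real.log_le_sub_one_of_pos h1t; linarith
    have e3 : exp (p * Real.log (1+t)) ≤ exp (p * t) :=
      exp_le_exp.2 (by nlinarith)
    have hpt : |p * t| ≤ 1 := by
      rw [abs_mul, abs_of_pos hp0]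
      calc p * |t| ≤ p * (1/(2*p)) := by nlinarith
        _ ≤ 1 := by rw [mul_one_div]; rw [div_le_one] <;> linarith
    have e4 := Real.exp_bound hpt (n := 2) (by norm_num)
    have e5 : exp (p*t) ≤ 1 + p*t + (p*t)^2 := by
      have : ∑ i ∈ Finset.range 2, (p*t) ^ i / i.factorial = 1 + p*t := by
        simp [Finset.sum_range_succ]
      rw [this] at e4
      have := abs_le.1 e4
      have h2 : |p*t| ^ 2 * ((2+1)/((2:ℕ).factorial * 2)) ≤ (p*t)^2 := by
        rw [sq_abs]; norm_num [Nat.factorial]; nlinarith [sq_nonneg (p*t)]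
      linarith [h2, this.2]
    have e6 : (p*t)^2 ≤ K * (t^2 + |t|^p) := by
      have hKpp : p * p ≤ K := by
        have := rpow_nonneg (by linarith : (0:ℝ) ≤ 1 + 2*p) p
        have := rpow_nonneg (by linarith : (0:ℝ) ≤ 2*p) (p-1)
        rw [hK]; nlinarith
      have : (p*t)^2 = (p*p) * t^2 := by ring
      rw [this]
      have h1 : (p*p) * t^2 ≤ K * t^2 := by nlinarith [sq_nonneg t]
      have h2 : 0 ≤ K * |t|^p := by
        have := rpow_nonneg (abs_nonneg t) p; nlinarith
      linarith
    calc |1+t|^p = exp (p * Real.log (1+t)) := e1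
      _ ≤ exp (p*t) := e3
      _ ≤ 1 + p*t + (p*t)^2 := e5
      _ ≤ 1 + p*t + K * (t^2 + |t|^p) := by linarith
  · -- large t
    have ht0 : 0 < |t| := lt_trans (by positivity) h
    have h1 : |1 + t| ^ p ≤ ((1+2*p) * |t|) ^ p := by
      apply rpow_le_rpow (abs_nonneg _) _ hp0.le
      calc |1+t| ≤ 1 + |t| := by
            calc |1+t| ≤ |(1:ℝ)| + |t| := abs_add_le 1 t
              _ = 1 + |t| := by rw [abs_one]
        _ ≤ 2*p*|t| + |t| := by
            have : 1 ≤ 2*p*|t| := by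
              have := (div_lt_iff₀ (by linarith : (0:ℝ) < 2*p)).1 h
              nlinarith
            linarith
        _ = (1+2*p) * |t| := by ring
    have h2 : ((1+2*p) * |t|) ^ p = (1+2*p)^p * |t|^p :=
      mul_rpow (by linarith) (abs_nonneg t)
    -- p * |t| ≤ p * (2p)^{p-1} * |t|^p
    have h3 : |t| ≤ (2*p)^(p-1) * |t|^p := by
      have key : (1/(2*p))^(p-1) * |t| ≤ |t|^(p-1) * |t| := by
        apply mul_le_mul_of_nonneg_right _ (abs_nonneg t)
        exact rpow_le_rpow (by positivity) h.le (by linarith)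
      have e : |t|^(p-1) * |t| = |t|^p := by
        rw [← Real.rpow_add_one (ne_of_gt ht0) (p-1)]; ring_nf
      rw [e] at key
      have e2 : (2*p)^(p-1) * ((1/(2*p))^(p-1) * |t|) = |t| := by
        rw [← mul_assoc, ← mul_rpow (by linarith) (by positivity)]
        rw [mul_one_div, div_self (by linarith : (2:ℝ)*p ≠ 0), one_rpow, one_mul]
      calc |t| = (2*p)^(p-1) * ((1/(2*p))^(p-1) * |t|) := e2.symm
        _ ≤ (2*p)^(p-1) * |t|^p := by
            apply mul_le_mul_of_nonneg_left key (rpow_nonneg (by linarith) _)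
    have hA : (0:ℝ) ≤ (1+2*p)^p := rpow_nonneg (by linarith) _
    have hB : (0:ℝ) ≤ (2*p)^(p-1) := rpow_nonneg (by linarith) _
    have hT : (0:ℝ) ≤ |t|^p := rpow_nonneg (abs_nonneg t) _
    have h4 : p * |t| ≤ p * ((2*p)^(p-1) * |t|^p) :=
      mul_le_mul_of_nonneg_left h3 hp0.le
    have h5 : |1+t|^p ≤ (1+2*p)^p * |t|^p := h2 ▸ h1
    have h6 : -(p*t) ≤ p * |t| := by
      have := neg_abs_le t; nlinarith
    rw [hK]
    nlinarith [sq_nonneg t, mul_nonneg hA hT, mul_nonneg hB hT,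
      mul_nonneg (mul_nonneg hA hT) (sq_nonneg t),
      mul_nonneg hA (sq_nonneg t), mul_nonneg hB (sq_nonneg t),
      mul_nonneg (mul_nonneg hB hT) hp0.le]

lemma pointwiseIneq (p : ℝ) (hp : 2 < p) :
    ∃ K : ℝ, 1 ≤ K ∧ ∀ x y : ℝ,
      |x + y| ^ p ≤ |x| ^ p + p * (|x| ^ (p-2) * x * y)
        + K * (|x| ^ (p-2) * y ^ 2 + |y| ^ p) := by
  obtain ⟨K, hK1, hK⟩ := oneDim p hp
  refine ⟨K, hK1, ?_⟩
  intro x y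
  rcases eq_or_ne x 0 with rfl | hx
  · simp only [zero_add, abs_zero]
    rw [Real.zero_rpow (by linarith : p ≠ 0), Real.zero_rpow (by linarith : p - 2 ≠ 0)]
    have h1 : (0:ℝ) ≤ |y|^p := rpow_nonneg (abs_nonneg y) p
    nlinarith
  · have hx0 : 0 < |x| := abs_pos.2 hx
    have hxp : (0:ℝ) ≤ |x|^p := rpow_nonneg (abs_nonneg x) p
    set t := y / x with ht
    have hA : |x|^(p-2) * x^2 = |x|^p := by
      have h2 : |x|^(p-2) * |x|^(2:ℝ) = |x|^p := by
        rw [← Real.rpow_add hx0]; norm_num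
      rw [Real.rpow_two, sq_abs] at h2
      exact h2
    have E1 : |x|^p * |1+t|^p = |x+y|^p := by
      have hxy : x + y = x * (1 + t) := by rw [ht]; field_simp
      rw [hxy, abs_mul, mul_rpow (abs_nonneg x) (abs_nonneg _)]
    have E4 : |x|^p * |t|^p = |y|^p := by
      have hxy : |x| * |t| = |y| := by
        rw [ht, abs_div, mul_div_cancel₀ _ (ne_of_gt hx0)]
      rw [← mul_rpow (abs_nonneg x) (abs_nonneg _), hxy]
    have key := mul_le_mul_of_nonneg_left (hK t) hxp
    rw [E1] at key
    have ER : |x|^p * (1 + p*t + K*(t^2 + |t|^p))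
        = |x|^p + p * (|x|^(p-2) * x * y) + K * (|x|^(p-2) * y^2 + |y|^p) := by
      rw [← E4, ← hA, ht]
      field_simp
    rw [ER] at key
    exact key

section Helpers
open Real
variable {Ω : Type} [MeasurableSpace Ω] {P : Measure Ω} [IsProbabilityMeasure P]

lemma int_rpow_abs {f : Ω → ℝ} {p r : ℝ} (hp : 2 < p) (hf : MemLp f (ENNReal.ofReal p) P)
    (hr : 0 < r) (hrp : r ≤ p) : Integrable (fun ω => |f ω| ^ r) P := by
  have h1 : MemLp f (ENNReal.ofReal r) P :=
    hf.mono_exponent (ENNReal.ofReal_le_ofReal hrp)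
  have h2 := h1.integrable_norm_rpow (by simp [ENNReal.ofReal_pos, hr]) (by simp)
  simpa [ENNReal.toReal_ofReal hr.le, Real.norm_eq_abs] using h2

lemma memLp_two {f : Ω → ℝ} {p : ℝ} (hp : 2 < p) (hf : MemLp f (ENNReal.ofReal p) P) :
    MemLp f 2 P := by
  refine hf.mono_exponent ?_
  have h2 : (2 : ENNReal) = ENNReal.ofReal 2 := by simp
  rw [h2]
  exact ENNReal.ofReal_le_ofReal hp.le

lemma int_sq {f : Ω → ℝ} {p : ℝ} (hp : 2 < p) (hf : MemLp f (ENNReal.ofReal p) P) :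
    Integrable (fun ω => (f ω) ^ 2) P := (memLp_two hp hf).integrable_sq

lemma int_self {f : Ω → ℝ} {p : ℝ} (hp : 2 < p) (hf : MemLp f (ENNReal.ofReal p) P) :
    Integrable f P :=
  hf.integrable (by
    have h1 : (1 : ENNReal) = ENNReal.ofReal 1 := by simp
    rw [h1]; exact ENNReal.ofReal_le_ofReal (by linarith))

lemma eLpNorm_ofReal_eq {f : Ω → ℝ} {r : ℝ} (hr : 0 < r)
    (hint : Integrable (fun ω => |f ω| ^ r) P) :
    eLpNorm f (ENNReal.ofReal r) P = (ENNReal.ofReal (∫ ω, |f ω| ^ r ∂P)) ^ (1/r) := by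
  rw [eLpNorm_eq_lintegral_rpow_enorm_toReal (by simp [ENNReal.ofReal_pos, hr]) (by simp),
    ENNReal.toReal_ofReal hr.le]
  congr 1
  rw [ofReal_integral_eq_lintegral_ofReal hint
    (Filter.Eventually.of_forall fun ω => rpow_nonneg (abs_nonneg _) r)]
  apply lintegral_congr fun ω => ?_
  rw [← ENNReal.ofReal_rpow_of_nonneg (abs_nonneg _) hr.le, ← Real.norm_eq_abs,
    ofReal_norm_eq_enorm]

lemma lyapunov {f : Ω → ℝ} {p : ℝ} (hp : 2 < p) (hf : MemLp f (ENNReal.ofReal p) P) :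
    ∫ ω, |f ω| ^ (p-2) ∂P ≤ (∫ ω, |f ω| ^ p ∂P) ^ ((p-2)/p) := by
  have hp0 : (0:ℝ) < p := by linarith
  have hp2 : (0:ℝ) < p - 2 := by linarith
  have hA : Integrable (fun ω => |f ω| ^ (p-2)) P := int_rpow_abs hp hf hp2 (by linarith)
  have hB : Integrable (fun ω => |f ω| ^ p) P := int_rpow_abs hp hf hp0 le_rfl
  have hAnn : 0 ≤ ∫ ω, |f ω| ^ (p-2) ∂P :=
    integral_nonneg fun ω => rpow_nonneg (abs_nonneg _) _
  have hBnn : 0 ≤ ∫ ω, |f ω| ^ p ∂P :=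
    integral_nonneg fun ω => rpow_nonneg (abs_nonneg _) _
  have h1 : eLpNorm f (ENNReal.ofReal (p-2)) P ≤ eLpNorm f (ENNReal.ofReal p) P :=
    eLpNorm_le_eLpNorm_of_exponent_le (ENNReal.ofReal_le_ofReal (by linarith)) hf.1
  rw [eLpNorm_ofReal_eq hp2 hA, eLpNorm_ofReal_eq hp0 hB] at h1
  have h2 := ENNReal.rpow_le_rpow h1 hp2.le
  rw [← ENNReal.rpow_mul, ← ENNReal.rpow_mul, one_div, inv_mul_cancel₀ hp2.ne',
    ENNReal.rpow_one, one_div, inv_mul_eq_div,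
    ENNReal.ofReal_rpow_of_nonneg hBnn (by positivity)] at h2
  exact (ENNReal.ofReal_le_ofReal_iff (by positivity)).1 h2


lemma abs_phi (p : ℝ) (hp : 2 < p) (u : ℝ) : |(|u|^(p-2) * u)| = |u|^(p-1) := by
  rcases eq_or_ne u 0 with rfl | hu
  · simp [Real.zero_rpow (by linarith : p - 2 ≠ 0), Real.zero_rpow (by linarith : p - 1 ≠ 0)]
  · rw [abs_mul, abs_of_nonneg (rpow_nonneg (abs_nonneg u) _),
      ← Real.rpow_add_one (by simpa using hu : |u| ≠ 0)]
    ring_nf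

lemma stepLemma {p : ℝ} (hp : 2 < p) {K : ℝ} (hK1 : 1 ≤ K)
    (hKpt : ∀ x y : ℝ, |x + y| ^ p ≤ |x| ^ p + p * (|x| ^ (p-2) * x * y)
        + K * (|x| ^ (p-2) * y ^ 2 + |y| ^ p))
    {S g : Ω → ℝ} (hSm : Measurable S) (hgm : Measurable g)
    (hS : MemLp S (ENNReal.ofReal p) P) (hg : MemLp g (ENNReal.ofReal p) P)
    (hg0 : ∫ ω, g ω ∂P = 0) (hind : IndepFun S g P) :
    ∫ ω, |S ω + g ω| ^ p ∂P ≤ ∫ ω, |S ω| ^ p ∂P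
      + K * ((∫ ω, |S ω| ^ p ∂P) ^ ((p-2)/p) * ∫ ω, (g ω)^2 ∂P + ∫ ω, |g ω| ^ p ∂P) := by
  have hp0 : (0:ℝ) < p := by linarith
  have hφc : Continuous (fun u : ℝ => |u|^(p-2) * u) :=
    (continuous_abs.rpow_const (fun x => Or.inr (by linarith))).mul continuous_id
  have hφm : Measurable (fun u : ℝ => |u|^(p-2) * u) := hφc.measurable
  have hψm : Measurable (fun u : ℝ => |u|^(p-2)) :=
    (continuous_abs.rpow_const (fun x => Or.inr (by linarith))).measurable
  have hsqm : Measurable (fun u : ℝ => u^2) := (continuous_pow 2).measurable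
  have I1 : Integrable (fun ω => |S ω| ^ p) P := int_rpow_abs hp hS hp0 le_rfl
  have Ibase : Integrable (fun ω => |S ω| ^ (p-1)) P := int_rpow_abs hp hS (by linarith) (by linarith)
  have I2 : Integrable (fun ω => |S ω|^(p-2) * S ω) P := by
    refine Ibase.mono' ((hφm.comp hSm).aestronglyMeasurable) ?_
    exact Filter.Eventually.of_forall fun ω => by
      rw [Real.norm_eq_abs, abs_phi p hp]
  have I3 : Integrable (fun ω => |S ω| ^ (p-2)) P := int_rpow_abs hp hS (by linarith) (by linarith)
  have I4 : Integrable g P := int_self hp hg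
  have I5 : Integrable (fun ω => (g ω)^2) P := int_sq hp hg
  have I6 : Integrable (fun ω => |g ω| ^ p) P := int_rpow_abs hp hg hp0 le_rfl
  have indφ : IndepFun (fun ω => |S ω|^(p-2) * S ω) g P := hind.comp hφm measurable_id
  have indψ : IndepFun (fun ω => |S ω|^(p-2)) (fun ω => (g ω)^2) P := hind.comp hψm hsqm
  have I7 : Integrable (fun ω => (|S ω|^(p-2) * S ω) * g ω) P := indφ.integrable_mul I2 I4
  have I8 : Integrable (fun ω => |S ω|^(p-2) * (g ω)^2) P := indψ.integrable_mul I3 I5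
  have E7 : ∫ ω, (|S ω|^(p-2) * S ω) * g ω ∂P = 0 := by
    have := indφ.integral_fun_mul_eq_mul_integral I2.aestronglyMeasurable I4.aestronglyMeasurable
    calc ∫ ω, (|S ω|^(p-2) * S ω) * g ω ∂P
        = (∫ ω, |S ω|^(p-2) * S ω ∂P) * ∫ ω, g ω ∂P := this
      _ = 0 := by rw [hg0, mul_zero]
  have E8 : ∫ ω, |S ω|^(p-2) * (g ω)^2 ∂P
      = (∫ ω, |S ω|^(p-2) ∂P) * ∫ ω, (g ω)^2 ∂P :=
    indψ.integral_fun_mul_eq_mul_integral I3.aestronglyMeasurable I5.aestronglyMeasurable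
  have hg2nn : 0 ≤ ∫ ω, (g ω)^2 ∂P := integral_nonneg fun ω => sq_nonneg _
  have hLya := lyapunov hp hS
  have main : ∫ ω, |S ω + g ω| ^ p ∂P ≤ ∫ ω, (|S ω| ^ p + p * ((|S ω|^(p-2) * S ω) * g ω)
      + K * (|S ω|^(p-2) * (g ω)^2 + |g ω|^p)) ∂P := by
    refine integral_mono_of_nonneg
      (Filter.Eventually.of_forall fun ω => rpow_nonneg (abs_nonneg _) _)
      (((I1.add (I7.const_mul p)).add ((I8.add I6).const_mul K))) ?_
    exact Filter.Eventually.of_forall fun ω => by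
      have := hKpt (S ω) (g ω); ring_nf at this ⊢; linarith
  have I7p : Integrable (fun ω => p * ((|S ω|^(p-2) * S ω) * g ω)) P := I7.const_mul p
  have J1 : Integrable (fun ω => |S ω|^p + p * ((|S ω|^(p-2) * S ω) * g ω)) P := I1.add I7p
  have J2 : Integrable (fun ω => K * (|S ω|^(p-2) * (g ω)^2 + |g ω|^p)) P :=
    (I8.add I6).const_mul K
  have expand : ∫ ω, (|S ω| ^ p + p * ((|S ω|^(p-2) * S ω) * g ω)
      + K * (|S ω|^(p-2) * (g ω)^2 + |g ω|^p)) ∂P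
      = ∫ ω, |S ω| ^ p ∂P + p * ∫ ω, (|S ω|^(p-2) * S ω) * g ω ∂P
        + K * (∫ ω, |S ω|^(p-2) * (g ω)^2 ∂P + ∫ ω, |g ω|^p ∂P) := by
    rw [integral_add J1 J2, integral_add I1 I7p, integral_const_mul, integral_const_mul,
      integral_add I8 I6]
  rw [expand, E7, E8, mul_zero, add_zero] at main
  have last : (∫ ω, |S ω|^(p-2) ∂P) * ∫ ω, (g ω)^2 ∂P
      ≤ (∫ ω, |S ω| ^ p ∂P) ^ ((p-2)/p) * ∫ ω, (g ω)^2 ∂P :=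
    mul_le_mul_of_nonneg_right hLya hg2nn
  have hI6nn : 0 ≤ ∫ ω, |g ω|^p ∂P := integral_nonneg fun ω => rpow_nonneg (abs_nonneg _) _
  have hK0 : (0:ℝ) ≤ K := by linarith
  nlinarith [main, mul_le_mul_of_nonneg_left last hK0]

end Helpers

theorem coreThm (p : ℝ) (hp : 2 < p) :
    ∃ C : ℝ, 0 < C ∧
      ∀ (Ω : Type) (_ : MeasurableSpace Ω) (P : Measure Ω), IsProbabilityMeasure P →
      ∀ (n : ℕ) (Y : Fin n → Ω → ℝ),
        (∀ i, Measurable (Y i)) →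
        iIndepFun Y P →
        (∀ i, ∫ ω, Y i ω ∂P = 0) →
        (∀ i, MemLp (Y i) (ENNReal.ofReal p) P) →
        ∫ ω, |∑ i, Y i ω| ^ p ∂P ≤
          C * max (∑ i, ∫ ω, |Y i ω| ^ p ∂P) ((∑ i, ∫ ω, (Y i ω) ^ 2 ∂P) ^ (p/2)) := by
  classical
  have hp0 : (0:ℝ) < p := by linarith
  have hpne : p ≠ 0 := ne_of_gt hp0
  obtain ⟨K, hK1, hKpt⟩ := pointwiseIneq p hp
  have hK0 : (0:ℝ) < K := by linarith
  have hKp2 : (0:ℝ) < K ^ (p/2) := rpow_pos_of_pos hK0 _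
  refine ⟨p/2 * K + K ^ (p/2), by nlinarith, ?_⟩
  intro Ω mΩ P hPP n Y hmeas hindep hcent hY
  set C : ℝ := p/2 * K + K ^ (p/2) with hC
  set m : Fin n → ℝ := fun i => ∫ ω, |Y i ω| ^ p ∂P with hm
  set v : Fin n → ℝ := fun i => ∫ ω, (Y i ω) ^ 2 ∂P with hv
  have hmnn : ∀ i, 0 ≤ m i := fun i => integral_nonneg fun ω => rpow_nonneg (abs_nonneg _) _
  have hvnn : ∀ i, 0 ≤ v i := fun i => integral_nonneg fun ω => sq_nonneg _
  set M : ℝ := ∑ i, m i with hM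
  set V : ℝ := ∑ i, v i with hV
  have hMnn : 0 ≤ M := Finset.sum_nonneg fun i _ => hmnn i
  have hVnn : 0 ≤ V := Finset.sum_nonneg fun i _ => hvnn i
  set B : ℝ := max M (V ^ (p/2)) with hB
  have hBnn : 0 ≤ B := le_trans hMnn (le_max_left _ _)
  set g : ℕ → Finset (Fin n) := fun k => Finset.univ.filter (fun i => (i:ℕ) < k) with hg
  have hg0 : g 0 = ∅ := by ext i; simp [hg]
  have hgn : g n = Finset.univ := by ext i; simp [hg, i.isLt]
  have hgstep : ∀ k, ∀ hk : k < n, g (k+1) = insert ⟨k, hk⟩ (g k) := by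
    intro k hk
    ext i
    simp only [hg, Finset.mem_filter, Finset.mem_univ, true_and, Finset.mem_insert]
    constructor
    · intro h
      rcases Nat.lt_succ_iff_lt_or_eq.1 h with h | h
      · exact Or.inr h
      · exact Or.inl (Fin.ext h)
    · rintro (rfl | h)
      · simp
      · omega
  have hgnotmem : ∀ k (hk : k < n), (⟨k, hk⟩ : Fin n) ∉ g k := by
    intro k hk
    simp [hg]
  set f : ℕ → ℝ := fun k => ∫ ω, |∑ i ∈ g k, Y i ω| ^ p ∂P with hf
  have hfnn : ∀ k, 0 ≤ f k := fun k => integral_nonneg fun ω => rpow_nonneg (abs_nonneg _) _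
  have hmemS : ∀ s : Finset (Fin n), MemLp (fun ω => ∑ i ∈ s, Y i ω) (ENNReal.ofReal p) P :=
    fun s => memLp_finset_sum s (fun i _ => hY i)
  have hmeasS : ∀ s : Finset (Fin n), Measurable (fun ω => ∑ i ∈ s, Y i ω) :=
    fun s => Finset.measurable_sum s (fun i _ => hmeas i)
  have frec : ∀ k, ∀ hk : k < n,
      f (k+1) ≤ f k + K * ((f k) ^ ((p-2)/p) * v ⟨k, hk⟩ + m ⟨k, hk⟩) := by
    intro k hk
    have hind : IndepFun (fun ω => ∑ i ∈ g k, Y i ω) (Y ⟨k, hk⟩) P := by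
      have h := hindep.indepFun_finset_sum_of_notMem hmeas (hgnotmem k hk)
      have he : (∑ i ∈ g k, Y i) = fun ω => ∑ i ∈ g k, Y i ω := by
        funext ω; exact Finset.sum_apply ω (g k) Y
      rwa [he] at h
    have hstep := stepLemma hp hK1 hKpt (hmeasS (g k)) (hmeas ⟨k, hk⟩)
      (hmemS (g k)) (hY ⟨k, hk⟩) (hcent ⟨k, hk⟩) hind
    have he2 : f (k+1) = ∫ ω, |(∑ i ∈ g k, Y i ω) + Y ⟨k, hk⟩ ω| ^ p ∂P := by
      rw [hf]
      simp only
      congr 1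
      funext ω
      rw [hgstep k hk, Finset.sum_insert (hgnotmem k hk)]
      ring_nf
    rw [he2]
    exact hstep
  have hne : (Finset.range (n+1)).Nonempty := ⟨0, Finset.mem_range.2 (Nat.succ_pos n)⟩
  set F : ℝ := (Finset.range (n+1)).sup' hne f with hF
  have hFf : ∀ k, k ≤ n → f k ≤ F := fun k hk =>
    Finset.le_sup' f (Finset.mem_range.2 (by omega))
  have hFnn : 0 ≤ F := le_trans (hfnn 0) (hFf 0 (Nat.zero_le n))
  have claim : ∀ k, k ≤ n →
      f k ≤ K * (F ^ ((p-2)/p) * (∑ i ∈ g k, v i) + ∑ i ∈ g k, m i) := by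
    intro k
    induction k with
    | zero =>
      intro _
      have hz : f 0 = 0 := by
        rw [hf]
        simp only [hg0, Finset.sum_empty, abs_zero]
        rw [Real.zero_rpow (by linarith : p ≠ 0)]
        simp
      rw [hz, hg0]
      simp
    | succ k ih =>
      intro hk1
      have hk : k < n := by omega
      have ihh := ih (by omega)
      have hrec := frec k hk
      have hmono : (f k) ^ ((p-2)/p) ≤ F ^ ((p-2)/p) :=
        rpow_le_rpow (hfnn k) (hFf k (by omega)) (div_nonneg (by linarith) hp0.le)
      have h2 : (f k) ^ ((p-2)/p) * v ⟨k, hk⟩ ≤ F ^ ((p-2)/p) * v ⟨k, hk⟩ :=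
        mul_le_mul_of_nonneg_right hmono (hvnn _)
      rw [hgstep k hk, Finset.sum_insert (hgnotmem k hk), Finset.sum_insert (hgnotmem k hk)]
      nlinarith [hrec, ihh, h2, hK0.le]
  have hFbound : F ≤ K * (F ^ ((p-2)/p) * V + M) := by
    obtain ⟨k0, hk0mem, hk0⟩ := Finset.exists_mem_eq_sup' hne f
    have hk0n : k0 ≤ n := by
      have := Finset.mem_range.1 hk0mem; omega
    have h1 := claim k0 hk0n
    have hsubv : ∑ i ∈ g k0, v i ≤ V := by
      rw [hV]
      exact Finset.sum_le_sum_of_subset_of_nonneg (Finset.subset_univ _)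
        (fun i _ _ => hvnn i)
    have hsubm : ∑ i ∈ g k0, m i ≤ M := by
      rw [hM]
      exact Finset.sum_le_sum_of_subset_of_nonneg (Finset.subset_univ _)
        (fun i _ _ => hmnn i)
    have hpow : (0:ℝ) ≤ F ^ ((p-2)/p) := rpow_nonneg hFnn _
    rw [← hk0] at h1
    have t1 : F ^ ((p-2)/p) * (∑ i ∈ g k0, v i) ≤ F ^ ((p-2)/p) * V :=
      mul_le_mul_of_nonneg_left hsubv hpow
    have t2 := mul_le_mul_of_nonneg_left (add_le_add t1 hsubm) hK0.le
    linarith [h1, t2]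
  have hVB : V ≤ B ^ (2/p) := by
    have h1 : V = (V ^ (p/2)) ^ (2/p) := by
      rw [← Real.rpow_mul hVnn]
      rw [show (p/2) * (2/p) = 1 by field_simp]
      exact (Real.rpow_one V).symm
    rw [h1]
    exact rpow_le_rpow (rpow_nonneg hVnn _) (le_max_right _ _) (div_nonneg (by norm_num) hp0.le)
  have hgeo : F ^ ((p-2)/p) * (K ^ (p/2) * B) ^ (2/p)
      ≤ (1 - 2/p) * F + (2/p) * (K ^ (p/2) * B) := by
    have hgm := Real.geom_mean_le_arith_mean2_weighted
      (by rw [sub_nonneg, div_le_one hp0]; linarith : (0:ℝ) ≤ 1 - 2/p)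
      (div_nonneg (by norm_num : (0:ℝ) ≤ 2) hp0.le) hFnn
      (mul_nonneg (rpow_nonneg hK0.le (p/2)) hBnn) (by ring : 1 - 2/p + 2/p = 1)
    calc F ^ ((p-2)/p) * (K ^ (p/2) * B) ^ (2/p)
        = F ^ (1 - 2/p) * (K ^ (p/2) * B) ^ (2/p) := by
          rw [show (p-2)/p = 1 - 2/p by field_simp]
      _ ≤ (1 - 2/p) * F + (2/p) * (K ^ (p/2) * B) := hgm
  have hKB : (K ^ (p/2) * B) ^ (2/p) = K * B ^ (2/p) := by
    rw [Real.mul_rpow (rpow_nonneg hK0.le _) hBnn, ← Real.rpow_mul hK0.le,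
      show (p/2) * (2/p) = 1 by field_simp, Real.rpow_one]
  have hchain : F ≤ K * B + ((1 - 2/p) * F + (2/p) * (K ^ (p/2) * B)) := by
    have h2 : F ^ ((p-2)/p) * V ≤ F ^ ((p-2)/p) * B ^ (2/p) :=
      mul_le_mul_of_nonneg_left hVB (rpow_nonneg hFnn _)
    have h3 : K * (F ^ ((p-2)/p) * B ^ (2/p)) = F ^ ((p-2)/p) * (K ^ (p/2) * B) ^ (2/p) := by
      rw [hKB]; ring
    have h4 : M ≤ B := le_max_left _ _
    calc F ≤ K * (F ^ ((p-2)/p) * V + M) := hFbound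
      _ ≤ K * (F ^ ((p-2)/p) * B ^ (2/p) + B) := by
          have h2' := mul_le_mul_of_nonneg_left h2 hK0.le
          have h4' := mul_le_mul_of_nonneg_left h4 hK0.le
          nlinarith [h2', h4']
      _ = F ^ ((p-2)/p) * (K ^ (p/2) * B) ^ (2/p) + K * B := by rw [mul_add, h3]
      _ ≤ (1 - 2/p) * F + (2/p) * (K ^ (p/2) * B) + K * B := by linarith [hgeo]
      _ = K * B + ((1 - 2/p) * F + (2/p) * (K ^ (p/2) * B)) := by ring
  have hFC : F ≤ C * B := by
    have h5 : (2/p) * F ≤ (K + (2/p) * K ^ (p/2)) * B := by nlinarith [hchain]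
    have e1 : (p/2) * ((2/p) * F) = F := by field_simp
    have h6 : F ≤ (p/2) * ((K + (2/p) * K ^ (p/2)) * B) := by
      rw [← e1]
      exact mul_le_mul_of_nonneg_left h5 (by linarith)
    have e2 : (p/2) * ((K + (2/p) * K ^ (p/2)) * B)
        = (p/2 * K + ((p/2) * (2/p)) * K ^ (p/2)) * B := by ring
    have e3 : (p/2) * (2/p) = 1 := by field_simp
    rw [e2, e3, one_mul] at h6
    rw [hC]
    exact h6
  have hfn : ∫ ω, |∑ i, Y i ω| ^ p ∂P = f n := by
    rw [hf]
    simp only [hgn]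
  rw [hfn]
  exact le_trans (hFf n le_rfl) hFC

lemma ofReal_max_eq (a b : ℝ) :
    ENNReal.ofReal (max a b) = max (ENNReal.ofReal a) (ENNReal.ofReal b) := by
  rcases le_total a b with h | h
  · rw [max_eq_right h, max_eq_right (ENNReal.ofReal_le_ofReal h)]
  · rw [max_eq_left h, max_eq_left (ENNReal.ofReal_le_ofReal h)]

/-- Rosenthal's inequality. -/
theorem rosenthal_inequality (p : ℝ) (hp : 2 < p) :
    ∃ C : ℝ, 0 < C ∧
      ∀ (Ω : Type) (_ : MeasurableSpace Ω) (P : Measure Ω), IsProbabilityMeasure P →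
      ∀ (n : ℕ) (Y : Fin n → Ω → ℝ),
        (∀ i, Measurable (Y i)) →
        iIndepFun Y P →
        (∀ i, ∫ ω, Y i ω ∂P = 0) →
        (∀ i, ∫⁻ ω, ENNReal.ofReal (|Y i ω| ^ p) ∂P < ⊤) →
        ∫⁻ ω, ENNReal.ofReal (|∑ i, Y i ω| ^ p) ∂P ≤
          ENNReal.ofReal C *
            max (∑ i, ∫⁻ ω, ENNReal.ofReal (|Y i ω| ^ p) ∂P)
              ((∑ i, ∫⁻ ω, ENNReal.ofReal ((Y i ω) ^ 2) ∂P) ^ (p / 2)) := by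
  have hp0 : (0:ℝ) < p := by linarith
  obtain ⟨C, hC, hmain⟩ := coreThm p hp
  refine ⟨C, hC, ?_⟩
  intro Ω mΩ P hPP n Y hmeas hindep hcent hmom
  haveI := hPP
  have henorm : ∀ x : ℝ, ‖x‖ₑ ^ p = ENNReal.ofReal (|x| ^ p) := fun x => by
    rw [← ENNReal.ofReal_rpow_of_nonneg (abs_nonneg _) hp0.le, ← Real.norm_eq_abs,
      ofReal_norm_eq_enorm]
  have hY : ∀ i, MemLp (Y i) (ENNReal.ofReal p) P := by
    intro i
    refine ⟨(hmeas i).aestronglyMeasurable, ?_⟩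
    rw [eLpNorm_eq_lintegral_rpow_enorm_toReal (by simp [ENNReal.ofReal_pos, hp0]) (by simp),
      ENNReal.toReal_ofReal hp0.le]
    refine ENNReal.rpow_lt_top_of_nonneg (by positivity) ?_
    rw [lintegral_congr (fun ω => henorm (Y i ω))]
    exact (hmom i).ne
  have hreal := hmain Ω mΩ P hPP n Y hmeas hindep hcent hY
  have hInt1 : ∀ i : Fin n, Integrable (fun ω => |Y i ω| ^ p) P :=
    fun i => int_rpow_abs hp (hY i) hp0 le_rfl
  have hInt2 : ∀ i : Fin n, Integrable (fun ω => (Y i ω) ^ 2) P :=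
    fun i => int_sq hp (hY i)
  have hIntS : Integrable (fun ω => |∑ i, Y i ω| ^ p) P :=
    int_rpow_abs hp (memLp_finset_sum _ fun i _ => hY i) hp0 le_rfl
  have c1 : ∀ i : Fin n, ∫⁻ ω, ENNReal.ofReal (|Y i ω| ^ p) ∂P
      = ENNReal.ofReal (∫ ω, |Y i ω| ^ p ∂P) := fun i =>
    (ofReal_integral_eq_lintegral_ofReal (hInt1 i)
      (Filter.Eventually.of_forall fun ω => rpow_nonneg (abs_nonneg _) _)).symm
  have c2 : ∀ i : Fin n, ∫⁻ ω, ENNReal.ofReal ((Y i ω) ^ 2) ∂P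
      = ENNReal.ofReal (∫ ω, (Y i ω) ^ 2 ∂P) := fun i =>
    (ofReal_integral_eq_lintegral_ofReal (hInt2 i)
      (Filter.Eventually.of_forall fun ω => sq_nonneg _)).symm
  have cS : ∫⁻ ω, ENNReal.ofReal (|∑ i, Y i ω| ^ p) ∂P
      = ENNReal.ofReal (∫ ω, |∑ i, Y i ω| ^ p ∂P) :=
    (ofReal_integral_eq_lintegral_ofReal hIntS
      (Filter.Eventually.of_forall fun ω => rpow_nonneg (abs_nonneg _) _)).symm
  have hmnn : ∀ i : Fin n, 0 ≤ ∫ ω, |Y i ω| ^ p ∂P :=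
    fun i => integral_nonneg fun ω => rpow_nonneg (abs_nonneg _) _
  have hvnn : ∀ i : Fin n, 0 ≤ ∫ ω, (Y i ω) ^ 2 ∂P :=
    fun i => integral_nonneg fun ω => sq_nonneg _
  have hVnn : 0 ≤ ∑ i, ∫ ω, (Y i ω) ^ 2 ∂P := Finset.sum_nonneg fun i _ => hvnn i
  have e1 : ∑ i, ∫⁻ ω, ENNReal.ofReal (|Y i ω| ^ p) ∂P
      = ENNReal.ofReal (∑ i, ∫ ω, |Y i ω| ^ p ∂P) := by
    rw [Finset.sum_congr rfl (fun i _ => c1 i),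
      ENNReal.ofReal_sum_of_nonneg (fun i _ => hmnn i)]
  have e2 : (∑ i, ∫⁻ ω, ENNReal.ofReal ((Y i ω) ^ 2) ∂P) ^ (p/2)
      = ENNReal.ofReal ((∑ i, ∫ ω, (Y i ω) ^ 2 ∂P) ^ (p/2)) := by
    rw [Finset.sum_congr rfl (fun i _ => c2 i),
      ← ENNReal.ofReal_sum_of_nonneg (fun i _ => hvnn i),
      ENNReal.ofReal_rpow_of_nonneg hVnn (by positivity)]
  rw [cS, e1, e2, ← ofReal_max_eq, ← ENNReal.ofReal_mul hC.le]
  exact ENNReal.ofReal_le_ofReal hreal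
end

section
/- Let d ≥ 1, r > 0 and ε > 0. Then there exists δ' > 0 such that for every δ ∈ (0,δ') and every x ∈ ℝ^d, the set {z ∈ ℤ^d : Q_{δ,z} ∩ ∂B_r(x) ≠ ∅} is finite and δ^d · #{z ∈ ℤ^d : Q_{δ,z} ∩ ∂B_r(x) ≠ ∅} < ε, where ∂B_r(x) = {y ∈ ℝ^d : ‖y−x‖ = r} is the Euclidean sphere of radius r about x. -/
open Metric

/-- The cube `δ z + [-δ/2, δ/2)^d` of the grid `𝒞_δ`. -/
def gridCube (d : ℕ) (δ : ℝ) (z : Fin d → ℤ) : Set (EuclideanSpace ℝ (Fin d)) :=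
  {y | ∀ i : Fin d, δ * (z i : ℝ) - δ / 2 ≤ y i ∧ y i < δ * (z i : ℝ) + δ / 2}

open MeasureTheory ENNReal Real

namespace BCE

variable {d : ℕ} {δ : ℝ}

lemma gridCube_eq_preimage (d : ℕ) (δ : ℝ) (z : Fin d → ℤ) :
    gridCube d δ z = (MeasurableEquiv.toLp 2 (Fin d → ℝ)).symm ⁻¹'
      (Set.univ.pi fun i => Set.Ico (δ * (z i : ℝ) - δ / 2) (δ * (z i : ℝ) + δ / 2)) := by
  ext y
  simp [gridCube, Set.mem_pi, MeasurableEquiv.coe_toLp_symm, Set.mem_Ico]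

lemma gridCube_measurableSet (d : ℕ) (δ : ℝ) (z : Fin d → ℤ) :
    MeasurableSet (gridCube d δ z) := by
  rw [gridCube_eq_preimage]
  exact (MeasurableSet.univ_pi fun i => measurableSet_Ico).preimage
    (MeasurableEquiv.toLp 2 (Fin d → ℝ)).symm.measurable

lemma volume_gridCube (hδ : 0 ≤ δ) (z : Fin d → ℤ) :
    volume (gridCube d δ z) = ENNReal.ofReal (δ ^ d) := by
  rw [gridCube_eq_preimage,
    (EuclideanSpace.volume_preserving_symm_measurableEquiv_toLp (Fin d)).measure_preimage
      (MeasurableSet.univ_pi fun i => measurableSet_Ico).nullMeasurableSet,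
    volume_pi_pi]
  have : ∀ i : Fin d, volume (Set.Ico (δ * (z i : ℝ) - δ / 2) (δ * (z i : ℝ) + δ / 2))
      = ENNReal.ofReal δ := by
    intro i
    rw [Real.volume_Ico]
    congr 1
    ring
  simp only [this, Finset.prod_const, Finset.card_univ, Fintype.card_fin]
  rw [← ENNReal.ofReal_pow hδ]

lemma gridCube_disjoint (hδ : 0 < δ) {z w : Fin d → ℤ} (h : z ≠ w) :
    Disjoint (gridCube d δ z) (gridCube d δ w) := by
  rw [Set.disjoint_left]
  intro y hy hy'
  apply h
  funext i
  have h1 := hy i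
  have h2 := hy' i
  have hzw : (z i : ℝ) < (w i : ℝ) + 1 := by nlinarith [h1.1, h1.2, h2.1, h2.2]
  have hwz : (w i : ℝ) < (z i : ℝ) + 1 := by nlinarith [h1.1, h1.2, h2.1, h2.2]
  have : z i < w i + 1 := by exact_mod_cast hzw
  have : w i < z i + 1 := by exact_mod_cast hwz
  omega

lemma gridCube_dist (hδ : 0 ≤ δ) {z : Fin d → ℤ} {p q : EuclideanSpace ℝ (Fin d)}
    (hp : p ∈ gridCube d δ z) (hq : q ∈ gridCube d δ z) :
    dist p q ≤ δ * Real.sqrt d := by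
  rw [EuclideanSpace.dist_eq]
  have hcoord : ∀ i : Fin d, dist (p i) (q i) ≤ δ := by
    intro i
    have h1 := hp i
    have h2 := hq i
    rw [Real.dist_eq, abs_le]
    constructor <;> linarith [h1.1, h1.2, h2.1, h2.2]
  calc Real.sqrt (∑ i, dist (p i) (q i) ^ 2)
      ≤ Real.sqrt (∑ _i : Fin d, δ ^ 2) := by
        apply Real.sqrt_le_sqrt
        apply Finset.sum_le_sum
        intro i _
        exact pow_le_pow_left₀ dist_nonneg (hcoord i) 2
    _ = δ * Real.sqrt d := by
        rw [Finset.sum_const, Finset.card_univ, Fintype.card_fin, nsmul_eq_mul,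
          Real.sqrt_mul (by positivity), Real.sqrt_sq hδ, mul_comm]

end BCE

/-- Boundary-cubes estimate: the cubes meeting a sphere of radius `r` have total
volume (counted as `δ^d` per cube) less than `ε`, uniformly in the center. -/
theorem boundary_cubes_estimate (d : ℕ) (hd : 1 ≤ d) (r ε : ℝ) (hr : 0 < r) (hε : 0 < ε) :
    ∃ δ' : ℝ, 0 < δ' ∧ ∀ δ ∈ Set.Ioo (0 : ℝ) δ', ∀ x : EuclideanSpace ℝ (Fin d),
      {z : Fin d → ℤ | (gridCube d δ z ∩ sphere x r).Nonempty}.Finite ∧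
      δ ^ d * ({z : Fin d → ℤ | (gridCube d δ z ∩ sphere x r).Nonempty}.ncard : ℝ) < ε := by
  haveI : Nonempty (Fin d) := Fin.pos_iff_nonempty.mp hd
  set C : ℝ := Real.sqrt Real.pi ^ d / Real.Gamma (d / 2 + 1) with hC
  have hCnn : 0 ≤ C := by
    apply div_nonneg (by positivity)
    exact (Real.Gamma_pos_of_pos (by positivity)).le
  -- continuity: f t := ((r+t)^d - (r-t)^d) * C  → 0 as t → 0
  set f : ℝ → ℝ := fun t => ((r + t) ^ d - (r - t) ^ d) * C with hf
  have hfc : Continuous f := by fun_prop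
  have hf0 : f 0 = 0 := by simp [hf]
  obtain ⟨δ₀, hδ₀pos, hδ₀⟩ :
      ∃ δ₀ > 0, ∀ t : ℝ, |t| < δ₀ → f t < ε := by
    have hca : ContinuousAt f 0 := hfc.continuousAt
    obtain ⟨δ₀, hδ₀pos, h⟩ := Metric.continuousAt_iff.mp hca ε hε
    refine ⟨δ₀, hδ₀pos, fun t ht => ?_⟩
    have := h (x := t) (by simpa [Real.dist_eq] using ht)
    rw [Real.dist_eq, hf0, sub_zero] at this
    exact lt_of_le_of_lt (le_abs_self _) this
  set s : ℝ := Real.sqrt d with hs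
  have hs1 : 1 ≤ s := by
    rw [hs]
    rw [show (1 : ℝ) = Real.sqrt 1 by simp]
    exact Real.sqrt_le_sqrt (by exact_mod_cast hd)
  refine ⟨min (δ₀ / (s + 1)) (r / (s + 1)), lt_min (by positivity) (by positivity), ?_⟩
  rintro δ ⟨hδpos, hδlt⟩ x
  set a : ℝ := δ * s with ha
  have hann : 0 ≤ a := by positivity
  have haδ₀ : a < δ₀ := by
    have h1 : δ < δ₀ / (s + 1) := lt_of_lt_of_le hδlt (min_le_left _ _)
    calc a = δ * s := rfl
      _ < (δ₀ / (s + 1)) * s := by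
          apply mul_lt_mul_of_pos_right h1 (by linarith)
      _ ≤ δ₀ := by
          rw [div_mul_eq_mul_div, div_le_iff₀ (by linarith)]
          nlinarith
  have har : a ≤ r := le_of_lt <| by
    have h1 : δ < r / (s + 1) := lt_of_lt_of_le hδlt (min_le_right _ _)
    calc a = δ * s := rfl
      _ < (r / (s + 1)) * s := mul_lt_mul_of_pos_right h1 (by linarith)
      _ ≤ r := by
          rw [div_mul_eq_mul_div, div_le_iff₀ (by linarith)]
          nlinarith
  -- the annulus
  set A : Set (EuclideanSpace ℝ (Fin d)) := closedBall x (r + a) \ ball x (r - a) with hA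
  have hvolA : volume A = ENNReal.ofReal (f a) := by
    rw [hA, measure_diff (ball_subset_closedBall.trans
        (closedBall_subset_closedBall (by linarith)))
      measurableSet_ball.nullMeasurableSet (measure_ball_lt_top).ne]
    rw [EuclideanSpace.volume_closedBall, EuclideanSpace.volume_ball, Fintype.card_fin]
    rw [← ENNReal.ofReal_pow (by linarith), ← ENNReal.ofReal_pow (by linarith),
      ← ENNReal.ofReal_mul (pow_nonneg (by linarith) d),
      ← ENNReal.ofReal_mul (pow_nonneg (by linarith) d),
      ← ENNReal.ofReal_sub _ (mul_nonneg (pow_nonneg (by linarith) d) hCnn)]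
    congr 1
    rw [hf]
    ring
  have hvolAε : volume A < ENNReal.ofReal ε := by
    rw [hvolA]
    exact (ENNReal.ofReal_lt_ofReal_iff hε).mpr (hδ₀ a (by rwa [abs_of_nonneg hann]))
  -- cubes meeting the sphere lie in the annulus
  have hsub : ∀ z : Fin d → ℤ, (gridCube d δ z ∩ sphere x r).Nonempty →
      gridCube d δ z ⊆ A := by
    rintro z ⟨p, hpc, hps⟩ q hq
    have hdist : dist q p ≤ a := BCE.gridCube_dist hδpos.le hq hpc
    have hpx : dist p x = r := mem_sphere.mp hps
    constructor
    · rw [mem_closedBall]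
      calc dist q x ≤ dist q p + dist p x := dist_triangle q p x
        _ ≤ a + r := by linarith
        _ = r + a := by ring
    · intro hball
      rw [mem_ball] at hball
      have h3 := dist_triangle p q x
      rw [dist_comm q p] at hdist
      linarith
  -- each finite subset of the index set has small cardinality
  have hkey : ∀ S : Finset (Fin d → ℤ),
      (↑S ⊆ {z : Fin d → ℤ | (gridCube d δ z ∩ sphere x r).Nonempty}) →
      (S.card : ℝ) * δ ^ d < ε := by
    intro S hS
    have hmeas : volume (⋃ z ∈ S, gridCube d δ z) = S.card * ENNReal.ofReal (δ ^ d) := by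
      rw [measure_biUnion_finset ?_ (fun z _ => BCE.gridCube_measurableSet d δ z)]
      · simp [BCE.volume_gridCube hδpos.le]
      · intro z _ w _ hzw
        exact BCE.gridCube_disjoint hδpos hzw
    have hle : (S.card : ℝ≥0∞) * ENNReal.ofReal (δ ^ d) ≤ volume A := by
      rw [← hmeas]
      apply measure_mono
      exact Set.iUnion₂_subset fun z hz => hsub z (hS hz)
    have hlt : (S.card : ℝ≥0∞) * ENNReal.ofReal (δ ^ d) < ENNReal.ofReal ε :=
      lt_of_le_of_lt hle hvolAε
    have : ENNReal.ofReal ((S.card : ℝ) * δ ^ d) < ENNReal.ofReal ε := by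
      rwa [ENNReal.ofReal_mul (by positivity), ENNReal.ofReal_natCast]
    have h2 := (ENNReal.ofReal_lt_ofReal_iff hε).mp this
    exact lt_of_le_of_lt (le_abs_self _ |>.trans (le_of_eq (abs_of_nonneg (by positivity)))) h2
  have hfin : {z : Fin d → ℤ | (gridCube d δ z ∩ sphere x r).Nonempty}.Finite := by
    by_contra hinf
    obtain ⟨S, hSsub, hScard⟩ :=
      Set.Infinite.exists_subset_card_eq hinf (⌈ε / δ ^ d⌉₊ + 1)
    have h1 := hkey S hSsub
    rw [hScard] at h1
    have h2 : ε / δ ^ d ≤ (⌈ε / δ ^ d⌉₊ : ℝ) := Nat.le_ceil _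
    have h3 : (⌈ε / δ ^ d⌉₊ : ℝ) + 1 ≤ ((⌈ε / δ ^ d⌉₊ + 1 : ℕ) : ℝ) := by push_cast; linarith
    have hδd : (0:ℝ) < δ ^ d := by positivity
    nlinarith [div_mul_cancel₀ ε hδd.ne']
  refine ⟨hfin, ?_⟩
  have := hkey hfin.toFinset (by simp)
  rw [mul_comm, Set.ncard_eq_toFinset_card _ hfin]
  exact this
end

section
/- Let d ≥ 1, r > 0, k ∈ ℕ and ε > 0. Then there exists δ_1 > 0 such that the following holds for every δ ∈ (0,δ_1], every ℓ ≥ r, and every a > 0 with k ≤ a·δ^{d+1}. Let P ⊆ ℝ^d be locally finite and suppose that for every z ∈ ℤ^d with Q_{δ,z} ⊆ B_{ℓ+1}(0) one has | #(P ∩ Q_{δ,z})/(a·δ^d) − 1 | < δ. Then for every finite set S ⊆ P ∩ B_{ℓ−r}(0) with #S ≤ k, Σ_{x∈S} Σ_{z∈ℤ^d} | #((P ∩ Q_{δ,z} ∩ B̄_r(x)) \ S)/a − vol(Q_{δ,z} ∩ B̄_r(x)) | < ε, where vol denotes Lebesgue measure on ℝ^d. -/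
open MeasureTheory Metric
open scoped ENNReal

lemma gridCube_eq_preimage (d : ℕ) (δ : ℝ) (z : Fin d → ℤ) :
    gridCube d δ z = (MeasurableEquiv.toLp 2 (Fin d → ℝ)).symm ⁻¹'
      (Set.univ.pi (fun i => Set.Ico (δ * (z i : ℝ) - δ / 2) (δ * (z i : ℝ) + δ / 2))) := by
  ext y
  simp [gridCube, Set.mem_pi, Set.mem_Ico, MeasurableEquiv.coe_toLp_symm]

lemma measurableSet_gridCube (d : ℕ) (δ : ℝ) (z : Fin d → ℤ) :
    MeasurableSet (gridCube d δ z) := by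
  rw [gridCube_eq_preimage]
  exact (MeasurableEquiv.toLp 2 (Fin d → ℝ)).symm.measurable
    (MeasurableSet.univ_pi fun i => measurableSet_Ico)

lemma volume_gridCube (d : ℕ) {δ : ℝ} (hδ : 0 ≤ δ) (z : Fin d → ℤ) :
    volume (gridCube d δ z) = ENNReal.ofReal δ ^ d := by
  rw [gridCube_eq_preimage,
    (EuclideanSpace.volume_preserving_symm_measurableEquiv_toLp (Fin d)).measure_preimage
      (MeasurableSet.univ_pi fun i => measurableSet_Ico).nullMeasurableSet,
    volume_pi_pi]
  have : ∀ i : Fin d, volume (Set.Ico (δ * (z i : ℝ) - δ / 2) (δ * (z i : ℝ) + δ / 2))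
      = ENNReal.ofReal δ := by
    intro i
    rw [Real.volume_Ico]
    congr 1
    ring
  simp [this]

lemma dist_le_of_mem_gridCube {d : ℕ} {δ : ℝ} (hδ : 0 ≤ δ) {z : Fin d → ℤ}
    {p q : EuclideanSpace ℝ (Fin d)} (hp : p ∈ gridCube d δ z) (hq : q ∈ gridCube d δ z) :
    dist p q ≤ δ * Real.sqrt d := by
  rw [EuclideanSpace.dist_eq]
  have h1 : ∀ i : Fin d, dist (p i) (q i) ^ 2 ≤ δ ^ 2 := by
    intro i
    rw [Real.dist_eq, sq_abs]
    have h2 := hp i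
    have h3 := hq i
    nlinarith [h2.1, h2.2, h3.1, h3.2]
  calc Real.sqrt (∑ i, dist (p i) (q i) ^ 2) ≤ Real.sqrt ((d : ℝ) * δ ^ 2) := by
        apply Real.sqrt_le_sqrt
        calc ∑ i, dist (p i) (q i) ^ 2 ≤ ∑ _i : Fin d, δ ^ 2 :=
              Finset.sum_le_sum fun i _ => h1 i
          _ = (d : ℝ) * δ ^ 2 := by simp [Finset.sum_const, mul_comm]
    _ = δ * Real.sqrt d := by
        rw [Real.sqrt_mul (Nat.cast_nonneg d), Real.sqrt_sq hδ]; ring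

lemma gridCube_disjoint {d : ℕ} {δ : ℝ} (hδ : 0 < δ) {z z' : Fin d → ℤ} (h : z ≠ z') :
    Disjoint (gridCube d δ z) (gridCube d δ z') := by
  rw [Set.disjoint_left]
  intro y hy hy'
  apply h; funext i
  have h1 := hy i; have h2 := hy' i
  have key : ∀ w w' : ℤ, δ * (w : ℝ) - δ / 2 ≤ y i → (y i : ℝ) < δ * (w' : ℝ) + δ / 2 →
      w ≤ w' := by
    intro w w' hw hw'
    have : δ * (w : ℝ) < δ * ((w' : ℝ) + 1) := by linarith
    have := (mul_lt_mul_iff_right₀ hδ).mp this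
    have : (w : ℝ) < (w' : ℝ) + 1 := this
    exact_mod_cast Int.lt_add_one_iff.mp (by exact_mod_cast this)
  have := key (z i) (z' i) h1.1 h2.2
  have := key (z' i) (z i) h2.1 h1.2
  omega

lemma abs_coord_sub_le {d : ℕ} (x y : EuclideanSpace ℝ (Fin d)) (i : Fin d) :
    |y i - x i| ≤ dist y x := by
  rw [← Real.dist_eq]
  calc dist (y i) (x i) = Real.sqrt (dist (y i) (x i) ^ 2) := (Real.sqrt_sq dist_nonneg).symm
    _ ≤ Real.sqrt (∑ j, dist (y j) (x j) ^ 2) := by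
        apply Real.sqrt_le_sqrt
        exact Finset.single_le_sum (f := fun j => dist (y j) (x j) ^ 2)
          (fun j _ => sq_nonneg _) (Finset.mem_univ i)
    _ = dist y x := (EuclideanSpace.dist_eq y x).symm

lemma ncard_le_diff_add {α : Type*} (A B : Set α) (hA : A.Finite) (hB : B.Finite) :
    A.ncard ≤ (A \ B).ncard + B.ncard := by
  calc A.ncard ≤ ((A \ B) ∪ B).ncard := by
        apply Set.ncard_le_ncard (fun a ha => ?_) (hA.diff.union hB)
        by_cases h : a ∈ B
        · exact Or.inr h
        · exact Or.inl ⟨ha, h⟩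
    _ ≤ (A \ B).ncard + B.ncard := Set.ncard_union_le _ _

lemma card_cubes_le {d : ℕ} {δ : ℝ} (hδ : 0 < δ) (F : Finset (Fin d → ℤ))
    (T : Set (EuclideanSpace ℝ (Fin d))) (hfin : volume T ≠ ⊤)
    (hT : ∀ z ∈ F, gridCube d δ z ⊆ T) :
    (F.card : ℝ) * δ ^ d ≤ (volume T).toReal := by
  have hle : (F.card : ℝ≥0∞) * ENNReal.ofReal δ ^ d ≤ volume T := by
    have hdisj : (F : Set (Fin d → ℤ)).PairwiseDisjoint (fun z => gridCube d δ z) :=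
      fun z _ z' _ hzz' => gridCube_disjoint hδ hzz'
    calc (F.card : ℝ≥0∞) * ENNReal.ofReal δ ^ d
        = ∑ z ∈ F, volume (gridCube d δ z) := by
          simp [volume_gridCube d hδ.le, Finset.sum_const, mul_comm]
      _ = volume (⋃ z ∈ F, gridCube d δ z) :=
          (measure_biUnion_finset hdisj fun z _ => measurableSet_gridCube d δ z).symm
      _ ≤ volume T := measure_mono (Set.iUnion₂_subset hT)
  have := ENNReal.toReal_mono hfin hle
  rw [ENNReal.toReal_mul, ENNReal.toReal_pow, ENNReal.toReal_ofReal hδ.le] at this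
  simpa using this

lemma key_bound (d : ℕ) (hd : 1 ≤ d) {δ r ℓ a : ℝ}
    (hδ : 0 < δ) (hr : 0 < r) (hℓ : r ≤ ℓ) (ha : 0 < a)
    (hs1 : δ * Real.sqrt d ≤ 1) (hsr : δ * Real.sqrt d ≤ r)
    (P : Set (EuclideanSpace ℝ (Fin d)))
    (hP : ∀ K : Set (EuclideanSpace ℝ (Fin d)), Bornology.IsBounded K → (P ∩ K).Finite)
    (hreg : ∀ z : Fin d → ℤ, gridCube d δ z ⊆ ball (0 : EuclideanSpace ℝ (Fin d)) (ℓ + 1) →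
      |((P ∩ gridCube d δ z).ncard : ℝ) / (a * δ ^ d) - 1| < δ)
    (S : Finset (EuclideanSpace ℝ (Fin d)))
    (hcard : (S.card : ℝ) ≤ a * δ ^ (d + 1))
    (x : EuclideanSpace ℝ (Fin d)) (hx : x ∈ ball (0 : EuclideanSpace ℝ (Fin d)) (ℓ - r)) :
    (∑' z : Fin d → ℤ, ENNReal.ofReal
        |(((P ∩ gridCube d δ z ∩ closedBall x r) \ ↑S).ncard : ℝ) / a -
          (volume (gridCube d δ z ∩ closedBall x r)).toReal|)
      ≤ ENNReal.ofReal
          (2 * δ * (r ^ d * (volume (ball (0 : EuclideanSpace ℝ (Fin d)) 1)).toReal)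
          + 3 * (((r + δ * Real.sqrt d) ^ d - (r - δ * Real.sqrt d) ^ d)
              * (volume (ball (0 : EuclideanSpace ℝ (Fin d)) 1)).toReal)) := by
  classical
  haveI : Nontrivial (EuclideanSpace ℝ (Fin d)) := by
    haveI : NeZero d := ⟨by omega⟩; infer_instance
  set ω := (volume (ball (0 : EuclideanSpace ℝ (Fin d)) 1)).toReal with hω
  set s := δ * Real.sqrt d with hs
  have hsqrt : (1 : ℝ) ≤ Real.sqrt d := by
    rw [show (1:ℝ) = Real.sqrt 1 by simp]
    exact Real.sqrt_le_sqrt (by exact_mod_cast hd)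
  have hs0 : 0 ≤ s := by positivity
  have hδs : δ ≤ s := by
    calc δ = δ * 1 := by ring
      _ ≤ δ * Real.sqrt d := by nlinarith
  have hδ1 : δ ≤ 1 := hδs.trans hs1
  have hxd : dist x 0 < ℓ - r := mem_ball.mp hx
  set f : (Fin d → ℤ) → ℝ := fun z =>
    |(((P ∩ gridCube d δ z ∩ closedBall x r) \ ↑S).ncard : ℝ) / a -
      (volume (gridCube d δ z ∩ closedBall x r)).toReal| with hf
  have hf0 : ∀ z, 0 ≤ f z := fun z => abs_nonneg _
  -- vanishing of f when the cube misses the ball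
  have hvanish : ∀ z : Fin d → ℤ, gridCube d δ z ∩ closedBall x r = ∅ → f z = 0 := by
    intro z hz
    have h1 : P ∩ gridCube d δ z ∩ closedBall x r = ∅ := by
      rw [Set.inter_assoc, hz, Set.inter_empty]
    rw [hf]
    simp only [h1, hz, Set.empty_diff, Set.ncard_empty, Nat.cast_zero, zero_div,
      measure_empty, ENNReal.toReal_zero, sub_zero, abs_zero]
  -- the support finset
  set Z : Finset (Fin d → ℤ) := Finset.Icc (fun i => ⌈(x i - r - δ) / δ⌉)
    (fun i => ⌊(x i + r + δ) / δ⌋) with hZ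
  have hmemZ : ∀ z : Fin d → ℤ, (gridCube d δ z ∩ closedBall x r).Nonempty → z ∈ Z := by
    intro z ⟨y, hyQ, hyB⟩
    have hdist : dist y x ≤ r := mem_closedBall.mp hyB
    rw [hZ, Finset.mem_Icc]
    constructor <;> (rw [Pi.le_def]; intro i) <;>
      [skip; skip] <;>
    · have hcoord : |y i - x i| ≤ r := (abs_coord_sub_le x y i).trans hdist
      rw [abs_le] at hcoord
      have h1 := (hyQ i).1
      have h2 := (hyQ i).2
      first
      | · rw [Int.ceil_le, div_le_iff₀ hδ]
          nlinarith [hcoord.1, hcoord.2]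
      | · rw [Int.le_floor, le_div_iff₀ hδ]
          nlinarith [hcoord.1, hcoord.2]
  -- basic facts
  have hNbound : ∀ z : Fin d → ℤ,
      gridCube d δ z ⊆ ball (0 : EuclideanSpace ℝ (Fin d)) (ℓ + 1) →
      |((P ∩ gridCube d δ z).ncard : ℝ) - a * δ ^ d| < a * δ ^ (d + 1) := by
    intro z hz
    have h := hreg z hz
    have hpos : (0:ℝ) < a * δ ^ d := by positivity
    have h2 : |((P ∩ gridCube d δ z).ncard : ℝ) - a * δ ^ d|
        = |((P ∩ gridCube d δ z).ncard : ℝ) / (a * δ ^ d) - 1| * (a * δ ^ d) := by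
      rw [← abs_of_pos hpos, ← abs_mul]
      congr 1
      field_simp
      rw [abs_of_pos hpos]
    rw [h2]
    calc |((P ∩ gridCube d δ z).ncard : ℝ) / (a * δ ^ d) - 1| * (a * δ ^ d)
        < δ * (a * δ ^ d) := mul_lt_mul_of_pos_right h hpos
      _ = a * δ ^ (d + 1) := by ring
  have hfinPQ : ∀ z : Fin d → ℤ,
      gridCube d δ z ⊆ ball (0 : EuclideanSpace ℝ (Fin d)) (ℓ + 1) →
      (P ∩ gridCube d δ z).Finite :=
    fun z hz => hP _ (isBounded_ball.subset hz)
  have hsubball_in : ∀ z : Fin d → ℤ, gridCube d δ z ⊆ closedBall x r →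
      gridCube d δ z ⊆ ball (0 : EuclideanSpace ℝ (Fin d)) (ℓ + 1) := by
    intro z hz w hw
    have h1 : dist w x ≤ r := mem_closedBall.mp (hz hw)
    have h2 := dist_triangle w x 0
    exact mem_ball.mpr (by linarith)
  have hsubball_bd : ∀ z : Fin d → ℤ, (gridCube d δ z ∩ closedBall x r).Nonempty →
      gridCube d δ z ⊆ ball (0 : EuclideanSpace ℝ (Fin d)) (ℓ + 1) := by
    rintro z ⟨q, hqQ, hqB⟩ w hw
    have h1 : dist w q ≤ s := dist_le_of_mem_gridCube hδ.le hw hqQ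
    have h2 : dist q x ≤ r := mem_closedBall.mp hqB
    have h3 := dist_triangle w q x
    have h4 := dist_triangle w x 0
    exact mem_ball.mpr (by linarith)
  -- per-term bound, interior cubes
  have hin_bound : ∀ z : Fin d → ℤ, gridCube d δ z ⊆ closedBall x r →
      f z ≤ 2 * δ ^ (d + 1) := by
    intro z hsub
    have hball := hsubball_in z hsub
    have hNfin := hfinPQ z hball
    have hN := hNbound z hball
    rw [abs_lt] at hN
    have hinter : P ∩ gridCube d δ z ∩ closedBall x r = P ∩ gridCube d δ z :=
      Set.inter_eq_left.mpr fun w hw => hsub hw.2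
    have hvol : (volume (gridCube d δ z ∩ closedBall x r)).toReal = δ ^ d := by
      rw [Set.inter_eq_left.mpr hsub, volume_gridCube d hδ.le,
        ← ENNReal.ofReal_pow hδ.le, ENNReal.toReal_ofReal (by positivity)]
    have hcle : ((((P ∩ gridCube d δ z) ∩ closedBall x r) \ ↑S).ncard : ℝ)
        ≤ ((P ∩ gridCube d δ z).ncard : ℝ) := by
      exact_mod_cast Set.ncard_le_ncard (Set.diff_subset.trans (by rw [hinter])) hNfin
    have hcge : ((P ∩ gridCube d δ z).ncard : ℝ) - S.card
        ≤ ((((P ∩ gridCube d δ z) ∩ closedBall x r) \ ↑S).ncard : ℝ) := by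
      have h5 := ncard_le_diff_add (P ∩ gridCube d δ z) ↑S hNfin S.finite_toSet
      rw [Set.ncard_coe_finset] at h5
      have h6 : ((P ∩ gridCube d δ z).ncard : ℝ)
          ≤ (((P ∩ gridCube d δ z) \ ↑S).ncard : ℝ) + S.card := by exact_mod_cast h5
      rw [hinter]
      linarith
    have heq : ((((P ∩ gridCube d δ z) ∩ closedBall x r) \ ↑S).ncard : ℝ) / a - δ ^ d
        = (((((P ∩ gridCube d δ z) ∩ closedBall x r) \ ↑S).ncard : ℝ) - a * δ ^ d) / a := by
      field_simp
    rw [hf]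
    simp only [hvol]
    rw [heq, abs_div, abs_of_pos ha, div_le_iff₀ ha]
    have hring : 2 * δ ^ (d + 1) * a = 2 * (a * δ ^ (d + 1)) := by ring
    rw [abs_le]
    constructor <;> linarith
  -- per-term bound, boundary cubes
  have hbd_bound : ∀ z : Fin d → ℤ, (gridCube d δ z ∩ closedBall x r).Nonempty →
      f z ≤ 3 * δ ^ d := by
    intro z hne
    have hball := hsubball_bd z hne
    have hNfin := hfinPQ z hball
    have hN := hNbound z hball
    rw [abs_lt] at hN
    have hcle : ((((P ∩ gridCube d δ z) ∩ closedBall x r) \ ↑S).ncard : ℝ)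
        ≤ ((P ∩ gridCube d δ z).ncard : ℝ) := by
      exact_mod_cast Set.ncard_le_ncard
        (Set.diff_subset.trans Set.inter_subset_left) hNfin
    have hvle : (volume (gridCube d δ z ∩ closedBall x r)).toReal ≤ δ ^ d := by
      have hle : volume (gridCube d δ z ∩ closedBall x r) ≤ ENNReal.ofReal δ ^ d := by
        rw [← volume_gridCube d hδ.le z]
        exact measure_mono Set.inter_subset_left
      have h7 := ENNReal.toReal_mono (ENNReal.pow_ne_top ENNReal.ofReal_ne_top) hle
      rwa [← ENNReal.ofReal_pow hδ.le, ENNReal.toReal_ofReal (by positivity)] at h7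
    have hv0 : 0 ≤ (volume (gridCube d δ z ∩ closedBall x r)).toReal := ENNReal.toReal_nonneg
    have hc0 : (0:ℝ) ≤ ((((P ∩ gridCube d δ z) ∩ closedBall x r) \ ↑S).ncard : ℝ) :=
      Nat.cast_nonneg _
    have hδd1 : δ ^ (d + 1) ≤ δ ^ d := by
      have h8 : (0:ℝ) ≤ δ ^ d := by positivity
      calc δ ^ (d + 1) = δ ^ d * δ := by ring
        _ ≤ δ ^ d * 1 := by nlinarith
        _ = δ ^ d := by ring
    have hca : ((((P ∩ gridCube d δ z) ∩ closedBall x r) \ ↑S).ncard : ℝ) / a ≤ 2 * δ ^ d := by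
      rw [div_le_iff₀ ha]
      nlinarith [hN.2]
    have hca0 : (0:ℝ) ≤ ((((P ∩ gridCube d δ z) ∩ closedBall x r) \ ↑S).ncard : ℝ) / a := by
      positivity
    have hδd0 : (0:ℝ) ≤ δ ^ d := by positivity
    rw [hf, abs_le]
    constructor <;> linarith
  -- reduce tsum to a finite sum
  have htsum : (∑' z : Fin d → ℤ, ENNReal.ofReal (f z)) = ENNReal.ofReal (∑ z ∈ Z, f z) := by
    rw [tsum_eq_sum (s := Z) ?_, ENNReal.ofReal_sum_of_nonneg (fun z _ => hf0 z)]
    intro z hz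
    rw [hvanish z ?_, ENNReal.ofReal_zero]
    by_contra hne
    exact hz (hmemZ z (Set.nonempty_iff_ne_empty.mpr hne))
  have hgoal : ∑ z ∈ Z, f z
      ≤ 2 * δ * (r ^ d * ω)
        + 3 * (((r + s) ^ d - (r - s) ^ d) * ω) := by
    classical
    set Zin := Z.filter (fun z => gridCube d δ z ⊆ closedBall x r) with hZin
    set Zbd := (Z.filter (fun z => ¬ gridCube d δ z ⊆ closedBall x r)).filter
      (fun z => (gridCube d δ z ∩ closedBall x r).Nonempty) with hZbd
    have hsplit : ∑ z ∈ Z, f z = ∑ z ∈ Zin, f z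
        + ∑ z ∈ Z.filter (fun z => ¬ gridCube d δ z ⊆ closedBall x r), f z :=
      (Finset.sum_filter_add_sum_filter_not Z _ f).symm
    have hrest : ∑ z ∈ Z.filter (fun z => ¬ gridCube d δ z ⊆ closedBall x r), f z
        = ∑ z ∈ Zbd, f z := by
      apply (Finset.sum_subset (Finset.filter_subset _ _) ?_).symm
      intro z hz hnz
      rw [Finset.mem_filter] at hnz
      apply hvanish
      rw [← Set.not_nonempty_iff_eq_empty]
      exact fun hne => hnz ⟨hz, hne⟩
    -- volume computations
    have hωfin : volume (ball (0 : EuclideanSpace ℝ (Fin d)) 1) ≠ ⊤ :=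
      measure_ball_lt_top.ne
    have hvolcb : ∀ R : ℝ, 0 ≤ R → (volume (closedBall x R)).toReal = R ^ d * ω := by
      intro R hR
      rw [Measure.addHaar_closedBall volume x hR, finrank_euclideanSpace_fin,
        ENNReal.toReal_mul, ENNReal.toReal_ofReal (pow_nonneg hR d)]
    have hvolball : (volume (ball x (r - s))).toReal = (r - s) ^ d * ω := by
      rw [Measure.addHaar_ball volume x (by linarith : (0:ℝ) ≤ r - s),
        finrank_euclideanSpace_fin, ENNReal.toReal_mul,
        ENNReal.toReal_ofReal (pow_nonneg (by linarith : (0:ℝ) ≤ r - s) d)]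
    have hannsub : ball x (r - s) ⊆ closedBall x (r + s) :=
      ball_subset_closedBall.trans (closedBall_subset_closedBall (by linarith))
    have hvolann : (volume (closedBall x (r + s) \ ball x (r - s))).toReal
        = ((r + s) ^ d - (r - s) ^ d) * ω := by
      rw [measure_diff hannsub measurableSet_ball.nullMeasurableSet measure_ball_lt_top.ne,
        ENNReal.toReal_sub_of_le (measure_mono hannsub) measure_closedBall_lt_top.ne,
        hvolcb (r + s) (by linarith), hvolball]
      ring
    -- cardinality bounds
    have hZin_card : (Zin.card : ℝ) * δ ^ d ≤ r ^ d * ω := by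
      have h9 := card_cubes_le hδ Zin (closedBall x r) measure_closedBall_lt_top.ne
        (fun z hz => (Finset.mem_filter.mp hz).2)
      rwa [hvolcb r hr.le] at h9
    have hZbd_card : (Zbd.card : ℝ) * δ ^ d ≤ ((r + s) ^ d - (r - s) ^ d) * ω := by
      have h10 := card_cubes_le hδ Zbd (closedBall x (r + s) \ ball x (r - s))
        (((measure_mono Set.diff_subset).trans_lt measure_closedBall_lt_top).ne) ?_
      · rwa [hvolann] at h10
      · intro z hz
        rw [hZbd, Finset.mem_filter, Finset.mem_filter] at hz
        obtain ⟨⟨_, hnsub⟩, hne⟩ := hz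
        obtain ⟨q, hqQ, hqB⟩ := hne
        obtain ⟨p, hpQ, hpB⟩ := Set.not_subset.mp hnsub
        intro w hw
        have h11 : dist w q ≤ s := dist_le_of_mem_gridCube hδ.le hw hqQ
        have h12 : dist q x ≤ r := mem_closedBall.mp hqB
        have h13 := dist_triangle w q x
        constructor
        · exact mem_closedBall.mpr (by linarith)
        · intro hwball
          have h14 : dist w x < r - s := mem_ball.mp hwball
          have h15 : dist p w ≤ s := dist_le_of_mem_gridCube hδ.le hpQ hw
          have h16 := dist_triangle p w x
          exact hpB (mem_closedBall.mpr (by linarith))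
    -- combine
    have hsum_in : ∑ z ∈ Zin, f z ≤ (Zin.card : ℝ) * (2 * δ ^ (d + 1)) := by
      have := Finset.sum_le_card_nsmul Zin f (2 * δ ^ (d + 1))
        (fun z hz => hin_bound z (Finset.mem_filter.mp hz).2)
      rwa [nsmul_eq_mul] at this
    have hsum_bd : ∑ z ∈ Zbd, f z ≤ (Zbd.card : ℝ) * (3 * δ ^ d) := by
      have := Finset.sum_le_card_nsmul Zbd f (3 * δ ^ d)
        (fun z hz => hbd_bound z (Finset.mem_filter.mp hz).2)
      rwa [nsmul_eq_mul] at this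
    have h17 : (Zin.card : ℝ) * (2 * δ ^ (d + 1)) = 2 * δ * ((Zin.card : ℝ) * δ ^ d) := by
      ring
    have h18 : (Zbd.card : ℝ) * (3 * δ ^ d) = 3 * ((Zbd.card : ℝ) * δ ^ d) := by ring
    have h19 : 2 * δ * ((Zin.card : ℝ) * δ ^ d) ≤ 2 * δ * (r ^ d * ω) := by
      apply mul_le_mul_of_nonneg_left hZin_card (by positivity)
    have h20 : 3 * ((Zbd.card : ℝ) * δ ^ d) ≤ 3 * (((r + s) ^ d - (r - s) ^ d) * ω) := by
      apply mul_le_mul_of_nonneg_left hZbd_card (by norm_num)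
    rw [hsplit, hrest]
    linarith
  rw [htsum]
  exact ENNReal.ofReal_le_ofReal hgoal
/-- Deterministic content of Lemma 4.3: on the regularity event, the normalized counts
of points in cubes intersected with balls around points of `S` are uniformly close to
the corresponding Lebesgue volumes. -/

theorem counts_close_to_volumes
    (d : ℕ) (hd : 1 ≤ d) (r : ℝ) (hr : 0 < r) (k : ℕ) (ε : ℝ) (hε : 0 < ε) :
    ∃ δ₁ : ℝ, 0 < δ₁ ∧ ∀ δ ∈ Set.Ioc (0 : ℝ) δ₁, ∀ ℓ : ℝ, r ≤ ℓ → ∀ a : ℝ, 0 < a →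
      (k : ℝ) ≤ a * δ ^ (d + 1) →
      ∀ P : Set (EuclideanSpace ℝ (Fin d)),
        (∀ K : Set (EuclideanSpace ℝ (Fin d)), Bornology.IsBounded K → (P ∩ K).Finite) →
        (∀ z : Fin d → ℤ, gridCube d δ z ⊆ ball (0 : EuclideanSpace ℝ (Fin d)) (ℓ + 1) →
          |((P ∩ gridCube d δ z).ncard : ℝ) / (a * δ ^ d) - 1| < δ) →
        ∀ S : Finset (EuclideanSpace ℝ (Fin d)),
          ↑S ⊆ P ∩ ball (0 : EuclideanSpace ℝ (Fin d)) (ℓ - r) → S.card ≤ k →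
          ∑ x ∈ S, ∑' z : Fin d → ℤ,
              ENNReal.ofReal
                |(((P ∩ gridCube d δ z ∩ closedBall x r) \ ↑S).ncard : ℝ) / a -
                  (volume (gridCube d δ z ∩ closedBall x r)).toReal|
            < ENNReal.ofReal ε := by
  classical
  set ω := (volume (ball (0 : EuclideanSpace ℝ (Fin d)) 1)).toReal with hω
  set g : ℝ → ℝ := fun t => 2 * t * (r ^ d * ω)
    + 3 * (((r + t * Real.sqrt d) ^ d - (r - t * Real.sqrt d) ^ d) * ω) with hg
  set K : ℕ := max k 1 with hK
  have hKpos : (0:ℝ) < K := by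
    have : 1 ≤ K := le_max_right k 1
    exact_mod_cast Nat.lt_of_lt_of_le Nat.zero_lt_one this
  have htarget : (0:ℝ) < ε / K := by positivity
  have hgcont : ContinuousAt g 0 := by
    apply Continuous.continuousAt
    rw [hg]
    continuity
  have hg0 : g 0 = 0 := by rw [hg]; norm_num
  obtain ⟨δ₀, hδ₀pos, hδ₀⟩ := Metric.continuousAt_iff.mp hgcont (ε / K) htarget
  have hsqrt : (1:ℝ) ≤ Real.sqrt d := by
    rw [show (1:ℝ) = Real.sqrt 1 by simp]
    exact Real.sqrt_le_sqrt (by exact_mod_cast hd)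
  have hsqrtpos : (0:ℝ) < Real.sqrt d := by linarith
  refine ⟨min (δ₀ / 2) (min r 1 / Real.sqrt d), by positivity, ?_⟩
  rintro δ ⟨hδpos, hδle⟩ ℓ hℓ a ha hk P hP hreg S hS hScard
  have hδs : δ * Real.sqrt d ≤ min r 1 := by
    have h1 : δ ≤ min r 1 / Real.sqrt d := hδle.trans (min_le_right _ _)
    calc δ * Real.sqrt d ≤ (min r 1 / Real.sqrt d) * Real.sqrt d :=
          mul_le_mul_of_nonneg_right h1 hsqrtpos.le
      _ = min r 1 := by field_simp
  have hs1 : δ * Real.sqrt d ≤ 1 := hδs.trans (min_le_right r 1)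
  have hsr : δ * Real.sqrt d ≤ r := hδs.trans (min_le_left r 1)
  have hgδ : g δ < ε / K := by
    have h2 : dist δ 0 < δ₀ := by
      rw [Real.dist_eq, sub_zero, abs_of_pos hδpos]
      have := hδle.trans (min_le_left _ _)
      linarith
    have h3 := hδ₀ h2
    rw [Real.dist_eq, hg0, sub_zero] at h3
    exact (le_abs_self _).trans_lt h3
  have hcard : (S.card : ℝ) ≤ a * δ ^ (d + 1) := by
    have : (S.card : ℝ) ≤ (k : ℝ) := by exact_mod_cast hScard
    linarith
  calc ∑ x ∈ S, ∑' z : Fin d → ℤ,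
          ENNReal.ofReal
            |(((P ∩ gridCube d δ z ∩ closedBall x r) \ ↑S).ncard : ℝ) / a -
              (volume (gridCube d δ z ∩ closedBall x r)).toReal|
      ≤ ∑ _x ∈ S, ENNReal.ofReal (g δ) := by
        apply Finset.sum_le_sum
        intro x hx
        exact key_bound d hd hδpos hr hℓ ha hs1 hsr P hP hreg S hcard x (hS hx).2
    _ = (S.card : ℝ≥0∞) * ENNReal.ofReal (g δ) := by
        rw [Finset.sum_const, nsmul_eq_mul]
    _ ≤ (K : ℝ≥0∞) * ENNReal.ofReal (g δ) := by
        apply mul_le_mul_left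
        exact_mod_cast Nat.cast_le.mpr (hScard.trans (le_max_left k 1))
    _ = ENNReal.ofReal ((K : ℝ) * g δ) := by
        rw [ENNReal.ofReal_mul (Nat.cast_nonneg K), ENNReal.ofReal_natCast]
    _ < ENNReal.ofReal ε := by
        rw [ENNReal.ofReal_lt_ofReal_iff hε]
        calc (K : ℝ) * g δ < (K : ℝ) * (ε / K) := mul_lt_mul_of_pos_left hgδ hKpos
          _ = ε := by field_simp
end
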